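/- (Correctness of the converted Shi–Waters delegatable HVE scheme.) Let p be a prime, a₁, a₂, a₃ ∈ ZMod p, l ∈ ℕ, S a finite subset of Fin l, and let α, v', w'₁, w'₂, t, r₁, r₂, y₁, y₂, y₃, ζ₁, ζ₂, ζ₃ ∈ ZMod p and u', h', x, σ, r₃, y₄, ζ₄ : Fin l → ZMod p. Define C₁ = (t*v') • b₁₁ + ζ₁ • b₂, C₂ = (t*w'₁) • b₁₁ + ζ₂ • b₂, C₃ = (t*w'₂) • b₁₁ + ζ₃ • b₂, C₄ᵢ = (t*(x i * u' i + h' i)) • b₁₁ + ζ₄ i • b₂, K₁ = (α + r₁*w'₁ + r₂*w'₂ + ∑_{i ∈ S} r₃ i * (σ i * u' i + h' i)) • b₁₂ + y₁ • b₃, K₂ = (-r₁*v') • b₁₂ + y₂ • b₃, K₃ = (-r₂*v') • b₁₂ + y₃ • b₃, K₄ᵢ = (-(r₃ i)*v') • b₁₂ + y₄ i • b₃ in (ZMod p)³. If σ i = x i for every i ∈ S, then ⟪C₁, K₁⟫ + ⟪C₂, K₂⟫ + ⟪C₃, K₃⟫ + ∑_{i ∈ S} ⟪C₄ᵢ, K₄ᵢ⟫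 = α*t*v'. (Hence Query(CT, TK_σ, PK) recovers M = C₀ / Ω^t, since Ω^t = ê(g,g)^{α t v'}.) -/

import Mathlib

/-- Inner product on `(ZMod p)³`. -/
def inner3 {p : ℕ} (u v : Fin 3 → ZMod p) : ZMod p := ∑ i, u i * v i

/-- Basis vector `b₁₁ = (1, 0, a₁)`. -/
def llB11 {p : ℕ} (a₁ : ZMod p) : Fin 3 → ZMod p := ![1, 0, a₁]

/-- Basis vector `b₁₂ = (1, a₂, 0)`. -/
def llB12 {p : ℕ} (a₂ : ZMod p) : Fin 3 → ZMod p := ![1, a₂, 0]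

/-- Basis vector `b₂ = (a₂, -1, a₁a₂ - a₃)`. -/
def llB2 {p : ℕ} (a₁ a₂ a₃ : ZMod p) : Fin 3 → ZMod p := ![a₂, -1, a₁ * a₂ - a₃]

/-- Basis vector `b₃ = (a₁, a₃, -1)`. -/
def llB3 {p : ℕ} (a₁ a₃ : ZMod p) : Fin 3 → ZMod p := ![a₁, a₃, -1]


lemma inner3_key {p : ℕ} (a₁ a₂ a₃ c z k y : ZMod p) :
    inner3 (c • llB11 a₁ + z • llB2 a₁ a₂ a₃) (k • llB12 a₂ + y • llB3 a₁ a₃) = c * k := by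
  simp [inner3, llB11, llB12, llB2, llB3, Fin.sum_univ_succ]
  ring

theorem stmt_12 (p : ℕ) (hp : p.Prime) (a₁ a₂ a₃ : ZMod p) (l : ℕ) (S : Finset (Fin l))
    (α v' w'₁ w'₂ t r₁ r₂ y₁ y₂ y₃ ζ₁ ζ₂ ζ₃ : ZMod p)
    (u' h' x σ r₃ y₄ ζ₄ : Fin l → ZMod p)
    (hmatch : ∀ i ∈ S, σ i = x i) :
    inner3 ((t * v') • llB11 a₁ + ζ₁ • llB2 a₁ a₂ a₃)
        ((α + r₁ * w'₁ + r₂ * w'₂ + ∑ i ∈ S, r₃ i * (σ i * u' i + h' i)) • llB12 a₂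
          + y₁ • llB3 a₁ a₃)
      + inner3 ((t * w'₁) • llB11 a₁ + ζ₂ • llB2 a₁ a₂ a₃)
          ((-r₁ * v') • llB12 a₂ + y₂ • llB3 a₁ a₃)
      + inner3 ((t * w'₂) • llB11 a₁ + ζ₃ • llB2 a₁ a₂ a₃)
          ((-r₂ * v') • llB12 a₂ + y₃ • llB3 a₁ a₃)
      + ∑ i ∈ S,
          inner3 ((t * (x i * u' i + h' i)) • llB11 a₁ + ζ₄ i • llB2 a₁ a₂ a₃)
            ((-(r₃ i) * v') • llB12 a₂ + y₄ i • llB3 a₁ a₃)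
      = α * t * v' := by
  simp only [inner3_key]
  rw [Finset.sum_congr rfl (fun i hi => by rw [hmatch i hi])]
  simp only [mul_add, Finset.mul_sum]
  ring_nf
  rw [add_assoc, ← Finset.sum_add_distrib]
  simp only [show ∀ i, t * v' * r₃ i * x i * u' i + t * v' * r₃ i * h' i +
    (-(t * v' * x i * u' i * r₃ i) - t * v' * h' i * r₃ i) = 0 from fun i => by ring,
    Finset.sum_const_zero, add_zero]
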